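/- Let ψ : U → ℝⁿ be a C^∞ map on an open set U ⊆ ℝᵐ (m ≤ n) whose derivative Dψ(u) : ℝᵐ → ℝⁿ is injective for every u ∈ U, and let u₀ ∈ U satisfy Dψ(u₀)ᵀ Dψ(u₀) = Idₘ (the parametrization is orthonormal at u₀). Let a₀ ∈ ℝⁿ satisfy Dψ(u₀)ᵀ(a₀ − ψ(u₀)) = 0, and assume the Hessian H of d_{a₀}(u) := ½‖a₀ − ψ(u)‖² at u₀ is invertible. Then there exist open neighborhoods A ⊆ ℝⁿ of a₀ and U′ ⊆ U of u₀ and a C^∞ map σ : A → U′ with σ(a₀) = u₀ such that: (i) for every a ∈ A, σ(a) is the unique u ∈ U′ with Dψ(u)ᵀ(a − ψ(u)) = 0; (ii) the critical-point map x := ψ ∘ σ satisfies Dx(a₀) = Dψ(u₀) H⁻¹ Dψ(u₀)ᵀ; and (iii) lim_{ε→0⁺} sup{ ‖x(a) − x(a₀)‖/‖a − a₀‖ : a ∈ A, 0 < ‖a − a₀‖ ≤ ε } = ‖H⁻¹‖. -/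

import Mathlib

open Filter Topology
open scoped RealInnerProductSpace

noncomputable section

/-- The adjoint, as a continuous linear map on operator spaces. -/
noncomputable def adjCLM (m n : ℕ) :
    (EuclideanSpace ℝ (Fin m) →L[ℝ] EuclideanSpace ℝ (Fin n)) →L[ℝ]
      (EuclideanSpace ℝ (Fin n) →L[ℝ] EuclideanSpace ℝ (Fin m)) :=
  LinearMap.mkContinuous
    { toFun := fun T => ContinuousLinearMap.adjoint T
      map_add' := fun T S => by simp
      map_smul' := fun c T => by
        ext y
        simp [ContinuousLinearMap.adjoint_inner_left] }
    1 (fun T => by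
      rw [one_mul]
      exact le_of_eq (ContinuousLinearMap.adjoint.norm_map T))

@[simp] lemma adjCLM_apply {m n : ℕ}
    (T : EuclideanSpace ℝ (Fin m) →L[ℝ] EuclideanSpace ℝ (Fin n)) :
    adjCLM m n T = ContinuousLinearMap.adjoint T := rfl

/-- The real inner product, as a continuous linear map into the dual. -/
noncomputable def innCLM (k : ℕ) :
    EuclideanSpace ℝ (Fin k) →L[ℝ] (EuclideanSpace ℝ (Fin k) →L[ℝ] ℝ) :=
  LinearMap.mkContinuous
    { toFun := fun x => innerSL ℝ x
      map_add' := fun x y => by ext v; simp [inner_add_left]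
      map_smul' := fun c x => by ext v; simp [inner_smul_left] }
    1 (fun x => by
      rw [one_mul]
      exact le_of_eq (innerSL_apply_norm (𝕜 := ℝ) x))

@[simp] lemma innCLM_apply {k : ℕ} (x v : EuclideanSpace ℝ (Fin k)) :
    innCLM k x v = ⟪x, v⟫ := rfl

lemma lim_sup_quotient {E F : Type*} [NormedAddCommGroup E] [NormedSpace ℝ E]
    [NormedAddCommGroup F] [NormedSpace ℝ F]
    {f : E → F} {L : E →L[ℝ] F} {a₀ : E} (hf : HasFDerivAt f L a₀)
    {A : Set E} (hA : IsOpen A) (ha₀ : a₀ ∈ A)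
    (hbd : ∀ a ∈ A, ‖f a - f a₀‖ ≤ (‖L‖ + 1) * ‖a - a₀‖) :
    Tendsto (fun ε : ℝ => sSup {q : ℝ | ∃ a ∈ A, 0 < ‖a - a₀‖ ∧ ‖a - a₀‖ ≤ ε ∧
        q = ‖f a - f a₀‖ / ‖a - a₀‖}) (𝓝[>] (0:ℝ)) (𝓝 ‖L‖) := by
  set S : ℝ → Set ℝ := fun ε => {q : ℝ | ∃ a ∈ A, 0 < ‖a - a₀‖ ∧ ‖a - a₀‖ ≤ ε ∧
        q = ‖f a - f a₀‖ / ‖a - a₀‖} with hS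
  have hSbd : ∀ ε, BddAbove (S ε) := by
    intro ε
    refine ⟨‖L‖ + 1, ?_⟩
    rintro q ⟨a, haA, hpos, -, rfl⟩
    rw [div_le_iff₀ hpos]
    exact hbd a haA
  have hSnonneg : ∀ ε q, q ∈ S ε → 0 ≤ q := by
    rintro ε q ⟨a, -, hpos, -, rfl⟩
    positivity
  rw [Metric.tendsto_nhds]
  intro δ hδ
  have hδ4 : (0:ℝ) < δ/4 := by positivity
  have h1 := hf.isLittleO.def hδ4
  rw [Metric.eventually_nhds_iff] at h1
  obtain ⟨r, hr, hball⟩ := h1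
  obtain ⟨r₂, hr₂, hball₂⟩ := Metric.isOpen_iff.1 hA a₀ ha₀
  have hmem : Set.Ioo (0:ℝ) (min r r₂) ∈ 𝓝[>] (0:ℝ) :=
    Ioo_mem_nhdsGT_of_mem ⟨le_refl 0, lt_min hr hr₂⟩
  filter_upwards [hmem] with ε hε
  obtain ⟨hε0, hεlt⟩ := hε
  have hεr : ε < r := lt_of_lt_of_le hεlt (min_le_left _ _)
  have hεr₂ : ε < r₂ := lt_of_lt_of_le hεlt (min_le_right _ _)
  have hupper : sSup (S ε) ≤ ‖L‖ + δ/4 := by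
    apply Real.sSup_le
    · rintro q ⟨a, haA, hpos, hle, rfl⟩
      have hda : dist a a₀ < r := by
        rw [dist_eq_norm]; exact lt_of_le_of_lt hle hεr
      have := hball hda
      rw [div_le_iff₀ hpos]
      calc ‖f a - f a₀‖ ≤ ‖f a - f a₀ - L (a - a₀)‖ + ‖L (a - a₀)‖ := by
            have := norm_add_le (f a - f a₀ - L (a - a₀)) (L (a - a₀)); simpa using this
        _ ≤ δ/4 * ‖a - a₀‖ + ‖L‖ * ‖a - a₀‖ := add_le_add this (L.le_opNorm _)
        _ = (‖L‖ + δ/4) * ‖a - a₀‖ := by ring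
    · positivity
  have hlower : ‖L‖ - δ/2 ≤ sSup (S ε) := by
    rcases le_or_gt ‖L‖ (δ/2) with hL | hL
    · have : (0:ℝ) ≤ sSup (S ε) := Real.sSup_nonneg (hSnonneg ε)
      linarith
    · obtain ⟨y, hy1, hy2⟩ := L.exists_lt_apply_of_lt_opNorm
        (show ‖L‖ - δ/4 < ‖L‖ by linarith)
      have hLy : 0 < ‖L y‖ := lt_trans (by linarith) hy2
      have hy0 : y ≠ 0 := by
        intro h; rw [h] at hLy; simp at hLy
      have hyn : 0 < ‖y‖ := norm_pos_iff.2 hy0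
      set z : E := ‖y‖⁻¹ • y with hz
      have hzn : ‖z‖ = 1 := by
        rw [hz, norm_smul, norm_inv, norm_norm, inv_mul_cancel₀ (ne_of_gt hyn)]
      have hLz : ‖L‖ - δ/4 < ‖L z‖ := by
        have : ‖L z‖ = ‖y‖⁻¹ * ‖L y‖ := by
          rw [hz, map_smul, norm_smul, norm_inv, norm_norm]
        rw [this]
        have h1' : (1:ℝ) ≤ ‖y‖⁻¹ := (one_le_inv₀ hyn).2 hy1.le
        nlinarith
      set a : E := a₀ + ε • z with ha
      have hnorm : ‖a - a₀‖ = ε := by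
        rw [ha, add_sub_cancel_left, norm_smul, hzn, Real.norm_eq_abs,
          abs_of_pos hε0, mul_one]
      have haA : a ∈ A := by
        apply hball₂
        rw [Metric.mem_ball, dist_eq_norm, hnorm]
        exact hεr₂
      have hq : ‖f a - f a₀‖ / ‖a - a₀‖ ∈ S ε := ⟨a, haA, by rw [hnorm]; exact hε0,
        le_of_eq hnorm, rfl⟩
      have hda : dist a a₀ < r := by rw [dist_eq_norm, hnorm]; exact hεr
      have hest := hball hda
      have hLa : ‖L (a - a₀)‖ = ε * ‖L z‖ := by
        have : a - a₀ = ε • z := by rw [ha]; abel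
        rw [this, map_smul, norm_smul, Real.norm_eq_abs, abs_of_pos hε0]
      have hfa : ε * (‖L‖ - δ/2) ≤ ‖f a - f a₀‖ := by
        have h3 : ‖L (a - a₀)‖ - ‖f a - f a₀‖ ≤ δ/4 * ‖a - a₀‖ := by
          calc ‖L (a - a₀)‖ - ‖f a - f a₀‖ ≤ ‖L (a - a₀) - (f a - f a₀)‖ :=
                norm_sub_norm_le _ _
            _ = ‖f a - f a₀ - L (a - a₀)‖ := by rw [norm_sub_rev]
            _ ≤ δ/4 * ‖a - a₀‖ := hest
        rw [hnorm, hLa] at h3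
        nlinarith
      have : ‖L‖ - δ/2 ≤ ‖f a - f a₀‖ / ‖a - a₀‖ := by
        rw [hnorm, le_div_iff₀ hε0]
        linarith [hfa]
      exact le_trans this (le_csSup (hSbd ε) hq)
  rw [Real.dist_eq, abs_lt]
  constructor <;> linarith

lemma norm_comp_eq {m n : ℕ} (D : EuclideanSpace ℝ (Fin m) →L[ℝ] EuclideanSpace ℝ (Fin n))
    (horth : (ContinuousLinearMap.adjoint D).comp D =
      ContinuousLinearMap.id ℝ (EuclideanSpace ℝ (Fin m)))
    (Hinv : EuclideanSpace ℝ (Fin m) →L[ℝ] EuclideanSpace ℝ (Fin m)) :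
    ‖(D.comp Hinv).comp (ContinuousLinearMap.adjoint D)‖ = ‖Hinv‖ := by
  have hiso : ∀ v, ‖D v‖ = ‖v‖ := by
    intro v
    have h1 : ⟪D v, D v⟫ = ⟪v, v⟫ := by
      rw [← ContinuousLinearMap.adjoint_inner_left]
      have := congrArg (fun T => ⟪T v, v⟫) horth
      simpa using this
    have h2 : ‖D v‖ ^ 2 = ‖v‖ ^ 2 := by
      rw [← real_inner_self_eq_norm_sq, ← real_inner_self_eq_norm_sq, h1]
    have := congrArg Real.sqrt h2
    rwa [Real.sqrt_sq (norm_nonneg _), Real.sqrt_sq (norm_nonneg _)] at this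
  have hadj : ‖ContinuousLinearMap.adjoint D‖ ≤ 1 := by
    rw [show ‖ContinuousLinearMap.adjoint D‖ = ‖D‖ from
      ContinuousLinearMap.adjoint.norm_map D]
    apply ContinuousLinearMap.opNorm_le_bound _ zero_le_one
    intro v; rw [hiso v, one_mul]
  apply le_antisymm
  · apply ContinuousLinearMap.opNorm_le_bound _ (norm_nonneg _)
    intro y
    simp only [ContinuousLinearMap.coe_comp', Function.comp_apply]
    rw [hiso]
    calc ‖Hinv (ContinuousLinearMap.adjoint D y)‖
        ≤ ‖Hinv‖ * ‖ContinuousLinearMap.adjoint D y‖ := Hinv.le_opNorm _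
      _ ≤ ‖Hinv‖ * (1 * ‖y‖) := by
          apply mul_le_mul_of_nonneg_left _ (norm_nonneg _)
          calc ‖ContinuousLinearMap.adjoint D y‖ ≤ ‖ContinuousLinearMap.adjoint D‖ * ‖y‖ :=
                (ContinuousLinearMap.adjoint D).le_opNorm y
            _ ≤ 1 * ‖y‖ := mul_le_mul_of_nonneg_right hadj (norm_nonneg _)
      _ = ‖Hinv‖ * ‖y‖ := by ring
  · apply ContinuousLinearMap.opNorm_le_bound _ (norm_nonneg _)
    intro v
    have hv : ContinuousLinearMap.adjoint D (D v) = v := by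
      have := congrArg (fun T => T v) horth; simpa using this
    calc ‖Hinv v‖ = ‖D (Hinv v)‖ := (hiso _).symm
      _ = ‖((D.comp Hinv).comp (ContinuousLinearMap.adjoint D)) (D v)‖ := by
          simp only [ContinuousLinearMap.coe_comp', Function.comp_apply, hv]
      _ ≤ ‖(D.comp Hinv).comp (ContinuousLinearMap.adjoint D)‖ * ‖D v‖ :=
          ContinuousLinearMap.le_opNorm _ _
      _ = ‖(D.comp Hinv).comp (ContinuousLinearMap.adjoint D)‖ * ‖v‖ := by rw [hiso]

set_option maxHeartbeats 2000000 in
/-- Chart formulation of Theorem 4.3 (condition number of the critical point problem):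
local existence, smoothness, derivative and Rice condition number of the critical-point map. -/
theorem stmt_0 {m n : ℕ} (hmn : m ≤ n)
    (U : Set (EuclideanSpace ℝ (Fin m))) (hU : IsOpen U)
    (ψ : EuclideanSpace ℝ (Fin m) → EuclideanSpace ℝ (Fin n))
    (hψ : ContDiffOn ℝ (⊤ : ℕ∞) ψ U)
    (hinj : ∀ u ∈ U, Function.Injective (fderiv ℝ ψ u))
    (u₀ : EuclideanSpace ℝ (Fin m)) (hu₀U : u₀ ∈ U)
    (horth : (ContinuousLinearMap.adjoint (fderiv ℝ ψ u₀)).comp (fderiv ℝ ψ u₀) =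
      ContinuousLinearMap.id ℝ (EuclideanSpace ℝ (Fin m)))
    (a₀ : EuclideanSpace ℝ (Fin n))
    (hcrit : ContinuousLinearMap.adjoint (fderiv ℝ ψ u₀) (a₀ - ψ u₀) = 0)
    (H Hinv : EuclideanSpace ℝ (Fin m) →L[ℝ] EuclideanSpace ℝ (Fin m))
    (hH : ∀ v w, ⟪H v, w⟫ =
      fderiv ℝ (fderiv ℝ (fun u => (1 / 2 : ℝ) * ‖a₀ - ψ u‖ ^ 2)) u₀ v w)
    (hHinv₁ : H.comp Hinv = ContinuousLinearMap.id ℝ (EuclideanSpace ℝ (Fin m)))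
    (hHinv₂ : Hinv.comp H = ContinuousLinearMap.id ℝ (EuclideanSpace ℝ (Fin m))) :
    ∃ (A : Set (EuclideanSpace ℝ (Fin n))) (U' : Set (EuclideanSpace ℝ (Fin m)))
      (σ : EuclideanSpace ℝ (Fin n) → EuclideanSpace ℝ (Fin m)),
      IsOpen A ∧ a₀ ∈ A ∧ IsOpen U' ∧ U' ⊆ U ∧ u₀ ∈ U' ∧
      ContDiffOn ℝ (⊤ : ℕ∞) σ A ∧ σ a₀ = u₀ ∧
      (∀ a ∈ A, σ a ∈ U' ∧ ∀ u ∈ U',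
        (ContinuousLinearMap.adjoint (fderiv ℝ ψ u) (a - ψ u) = 0 ↔ u = σ a)) ∧
      fderiv ℝ (fun a => ψ (σ a)) a₀ =
        ((fderiv ℝ ψ u₀).comp Hinv).comp (ContinuousLinearMap.adjoint (fderiv ℝ ψ u₀)) ∧
      Tendsto (fun ε : ℝ => sSup {q : ℝ | ∃ a ∈ A, 0 < ‖a - a₀‖ ∧ ‖a - a₀‖ ≤ ε ∧
          q = ‖ψ (σ a) - ψ (σ a₀)‖ / ‖a - a₀‖}) (𝓝[>] (0 : ℝ)) (𝓝 ‖Hinv‖) := by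
  classical
  have hone : (1 : WithTop ℕ∞) ≤ ((⊤ : ℕ∞) : WithTop ℕ∞) := by
    exact_mod_cast (le_top : (1:ℕ∞) ≤ ⊤)
  -- derivative of ψ is smooth
  have hψderiv : ContDiffOn ℝ (⊤ : ℕ∞) (fderiv ℝ ψ) U := by
    apply hψ.fderiv_of_isOpen hU
    exact_mod_cast (le_top : ((⊤:ℕ∞)+1 : ℕ∞) ≤ ⊤)
  set B : EuclideanSpace ℝ (Fin m) →
      (EuclideanSpace ℝ (Fin n) →L[ℝ] EuclideanSpace ℝ (Fin m)) :=
    fun u => ContinuousLinearMap.adjoint (fderiv ℝ ψ u) with hBdef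
  set Fm : (EuclideanSpace ℝ (Fin n) × EuclideanSpace ℝ (Fin m)) → EuclideanSpace ℝ (Fin m) :=
    fun p => B p.2 (p.1 - ψ p.2) with hFmdef
  set Φ : (EuclideanSpace ℝ (Fin n) × EuclideanSpace ℝ (Fin m)) →
      (EuclideanSpace ℝ (Fin n) × EuclideanSpace ℝ (Fin m)) :=
    fun p => (p.1, Fm p) with hΦdef
  set W : Set (EuclideanSpace ℝ (Fin n) × EuclideanSpace ℝ (Fin m)) :=
    (Set.univ : Set (EuclideanSpace ℝ (Fin n))) ×ˢ U with hWdef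
  have hWopen : IsOpen W := isOpen_univ.prod hU
  have hz₀W : (a₀, u₀) ∈ W := ⟨trivial, hu₀U⟩
  have hBsmooth : ContDiffOn ℝ (⊤ : ℕ∞) B U := by
    have := (adjCLM m n).contDiff.comp_contDiffOn hψderiv
    exact this
  have hFsmooth : ContDiffOn ℝ (⊤ : ℕ∞) Fm W := by
    apply ContDiffOn.clm_apply
    · exact hBsmooth.comp (contDiff_snd.contDiffOn) (fun p hp => hp.2)
    · exact (contDiff_fst.contDiffOn).sub (hψ.comp (contDiff_snd.contDiffOn) (fun p hp => hp.2))
  have hΦsmooth : ContDiffOn ℝ (⊤ : ℕ∞) Φ W := (contDiff_fst.contDiffOn).prodMk hFsmooth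
  -- the map G and its derivative
  set G : EuclideanSpace ℝ (Fin m) → EuclideanSpace ℝ (Fin m) :=
    fun u => B u (a₀ - ψ u) with hGdef
  have hGsmooth : ContDiffOn ℝ (⊤ : ℕ∞) G U := by
    have hG : G = fun u => Fm (a₀, u) := rfl
    rw [hG]
    exact hFsmooth.comp ((contDiff_const.prodMk contDiff_id).contDiffOn)
      (fun u hu => ⟨trivial, hu⟩)
  have hGdiffAt : DifferentiableAt ℝ G u₀ :=
    (hGsmooth.contDiffAt (hU.mem_nhds hu₀U)).differentiableAt (by simp)
  set G' := fderiv ℝ G u₀ with hG'def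
  have hG' : HasFDerivAt G G' u₀ := hGdiffAt.hasFDerivAt
  -- first derivative of the distance function on U
  have hdA : ∀ u ∈ U, HasFDerivAt (fun u => (1 / 2 : ℝ) * ‖a₀ - ψ u‖ ^ 2)
      (-(innCLM m (G u))) u := by
    intro u huU
    have hψu : HasFDerivAt ψ (fderiv ℝ ψ u) u :=
      ((hψ.contDiffAt (hU.mem_nhds huU)).differentiableAt (by simp)).hasFDerivAt
    have hsub : HasFDerivAt (fun u => a₀ - ψ u) (-(fderiv ℝ ψ u)) u := by
      exact hψu.const_sub a₀
    have hinner := (hsub.inner ℝ hsub).const_mul (1 / 2 : ℝ)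
    have heq : (fun u => (1 / 2 : ℝ) * ‖a₀ - ψ u‖ ^ 2)
        = fun u => (1 / 2 : ℝ) * ⟪a₀ - ψ u, a₀ - ψ u⟫ := by
      funext u; rw [real_inner_self_eq_norm_sq]
    rw [heq]
    refine hinner.congr_fderiv ?_
    symm
    ext v
    simp only [ContinuousLinearMap.coe_smul', Pi.smul_apply, ContinuousLinearMap.coe_comp',
      Function.comp_apply, ContinuousLinearMap.prod_apply, ContinuousLinearMap.neg_apply,
      fderivInnerCLM_apply, innCLM_apply, smul_eq_mul]
    simp only [hGdef, hBdef]
    rw [ContinuousLinearMap.adjoint_inner_left, real_inner_comm]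
    rw [inner_neg_right, inner_neg_left, real_inner_comm (a₀ - ψ u) (fderiv ℝ ψ u v)]
    ring
  -- identify G' with -H
  have hfd_eq : fderiv ℝ (fderiv ℝ (fun u => (1 / 2 : ℝ) * ‖a₀ - ψ u‖ ^ 2)) u₀
      = (-(innCLM m)).comp G' := by
    have hev : fderiv ℝ (fun u => (1 / 2 : ℝ) * ‖a₀ - ψ u‖ ^ 2)
        =ᶠ[𝓝 u₀] fun u => -(innCLM m (G u)) := by
      filter_upwards [hU.mem_nhds hu₀U] with u hu
      exact (hdA u hu).fderiv
    rw [hev.fderiv_eq]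
    have hc : HasFDerivAt (fun y => -(innCLM m y)) (-(innCLM m)) (G u₀) := by
      exact ((innCLM m).hasFDerivAt (x := G u₀)).neg
    exact (hc.comp u₀ hG').fderiv
  have hG'H : G' = -H := by
    apply ContinuousLinearMap.ext
    intro v
    apply ext_inner_right ℝ
    intro w
    have h := hH v w
    rw [hfd_eq] at h
    simp only [ContinuousLinearMap.coe_comp', Function.comp_apply,
      ContinuousLinearMap.neg_apply, innCLM_apply] at h
    rw [ContinuousLinearMap.neg_apply, inner_neg_left]
    linarith
  -- derivative of Fm at (a₀, u₀)
  set Dψ₀ := fderiv ℝ ψ u₀ with hDψ₀def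
  set Bu₀ := ContinuousLinearMap.adjoint Dψ₀ with hBu₀def
  have hBpsmooth : ContDiffOn ℝ (⊤ : ℕ∞) (fun p : EuclideanSpace ℝ (Fin n) × EuclideanSpace ℝ (Fin m) => B p.2) W :=
    hBsmooth.comp (contDiff_snd.contDiffOn) (fun p hp => hp.2)
  have hBdiffAt : DifferentiableAt ℝ (fun p : EuclideanSpace ℝ (Fin n) × EuclideanSpace ℝ (Fin m) => B p.2) (a₀, u₀) :=
    (hBpsmooth.contDiffAt (hWopen.mem_nhds hz₀W)).differentiableAt (by simp)
  have hFm' : HasFDerivAt Fm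
      (Bu₀.comp (ContinuousLinearMap.fst ℝ (EuclideanSpace ℝ (Fin n)) (EuclideanSpace ℝ (Fin m))) +
        (-H).comp (ContinuousLinearMap.snd ℝ (EuclideanSpace ℝ (Fin n)) (EuclideanSpace ℝ (Fin m)))) (a₀, u₀) := by
    have h1 : HasFDerivAt (fun p : EuclideanSpace ℝ (Fin n) × EuclideanSpace ℝ (Fin m) => G p.2)
        (G'.comp (ContinuousLinearMap.snd ℝ (EuclideanSpace ℝ (Fin n)) (EuclideanSpace ℝ (Fin m)))) (a₀, u₀) :=
      by have h := hG'.comp (a₀, u₀) (hasFDerivAt_snd (𝕜 := ℝ) (p := (a₀, u₀))); exact h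
    have hc := hBdiffAt.hasFDerivAt
    have hu' : HasFDerivAt (fun p : EuclideanSpace ℝ (Fin n) × EuclideanSpace ℝ (Fin m) => p.1 - a₀)
        (ContinuousLinearMap.fst ℝ (EuclideanSpace ℝ (Fin n)) (EuclideanSpace ℝ (Fin m))) (a₀, u₀) := by
      simpa using (hasFDerivAt_fst (p := (a₀, u₀))).sub_const a₀
    have h2 := hc.clm_apply hu'
    simp only [sub_self, map_zero, add_zero] at h2
    have heqF : Fm = fun p : EuclideanSpace ℝ (Fin n) × EuclideanSpace ℝ (Fin m) => G p.2 + B p.2 (p.1 - a₀) := by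
      funext p
      simp only [hFmdef, hGdef]
      rw [← map_add]
      congr 1
      abel
    rw [heqF]
    have h3 := h1.add h2
    rw [hG'H] at h3
    refine h3.congr_fderiv ?_
    symm
    apply ContinuousLinearMap.ext
    intro p
    simp only [ContinuousLinearMap.add_apply, ContinuousLinearMap.coe_comp',
      Function.comp_apply, ContinuousLinearMap.coe_fst', ContinuousLinearMap.coe_snd',
      ContinuousLinearMap.neg_apply, hBu₀def, hDψ₀def]
    abel
  -- the continuous linear equivalence Φ'
  set Tfwd : (EuclideanSpace ℝ (Fin n) × EuclideanSpace ℝ (Fin m)) →L[ℝ]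
      (EuclideanSpace ℝ (Fin n) × EuclideanSpace ℝ (Fin m)) :=
    (ContinuousLinearMap.fst ℝ (EuclideanSpace ℝ (Fin n)) (EuclideanSpace ℝ (Fin m))).prod
      (Bu₀.comp (ContinuousLinearMap.fst ℝ (EuclideanSpace ℝ (Fin n)) (EuclideanSpace ℝ (Fin m))) +
        (-H).comp (ContinuousLinearMap.snd ℝ (EuclideanSpace ℝ (Fin n)) (EuclideanSpace ℝ (Fin m))))
    with hTfwddef
  set Tinv : (EuclideanSpace ℝ (Fin n) × EuclideanSpace ℝ (Fin m)) →L[ℝ]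
      (EuclideanSpace ℝ (Fin n) × EuclideanSpace ℝ (Fin m)) :=
    (ContinuousLinearMap.fst ℝ (EuclideanSpace ℝ (Fin n)) (EuclideanSpace ℝ (Fin m))).prod
      (Hinv.comp (Bu₀.comp (ContinuousLinearMap.fst ℝ (EuclideanSpace ℝ (Fin n))
          (EuclideanSpace ℝ (Fin m))) -
        ContinuousLinearMap.snd ℝ (EuclideanSpace ℝ (Fin n)) (EuclideanSpace ℝ (Fin m))))
    with hTinvdef
  have hHinv₂' : ∀ v, Hinv (H v) = v := by
    intro v
    have := congrArg (fun T => T v) hHinv₂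
    simpa using this
  have hHinv₁' : ∀ v, H (Hinv v) = v := by
    intro v
    have := congrArg (fun T => T v) hHinv₁
    simpa using this
  have hleft : Function.LeftInverse Tinv Tfwd := by
    intro p
    apply Prod.ext
    · simp [hTfwddef, hTinvdef]
    · simp only [hTfwddef, hTinvdef, ContinuousLinearMap.prod_apply,
        ContinuousLinearMap.coe_comp', Function.comp_apply, ContinuousLinearMap.coe_fst',
        ContinuousLinearMap.coe_snd', ContinuousLinearMap.add_apply,
        ContinuousLinearMap.sub_apply, ContinuousLinearMap.neg_apply]
      have h4 : Bu₀ p.1 - (Bu₀ p.1 + -H p.2) = H p.2 := by abel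
      rw [h4, hHinv₂']
  have hright : Function.RightInverse Tinv Tfwd := by
    intro p
    apply Prod.ext
    · simp [hTfwddef, hTinvdef]
    · simp only [hTfwddef, hTinvdef, ContinuousLinearMap.prod_apply,
        ContinuousLinearMap.coe_comp', Function.comp_apply, ContinuousLinearMap.coe_fst',
        ContinuousLinearMap.coe_snd', ContinuousLinearMap.add_apply,
        ContinuousLinearMap.sub_apply, ContinuousLinearMap.neg_apply]
      rw [hHinv₁']
      abel
  set Φeq := ContinuousLinearEquiv.equivOfInverse Tfwd Tinv hleft hright with hΦeqdef
  have hΦF : HasFDerivAt Φ (Φeq : (EuclideanSpace ℝ (Fin n) × EuclideanSpace ℝ (Fin m)) →L[ℝ]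
      (EuclideanSpace ℝ (Fin n) × EuclideanSpace ℝ (Fin m))) (a₀, u₀) := by
    exact (hasFDerivAt_fst (p := (a₀, u₀))).prodMk hFm'
  have hstrict : HasStrictFDerivAt Φ
      (Φeq : (EuclideanSpace ℝ (Fin n) × EuclideanSpace ℝ (Fin m)) →L[ℝ]
      (EuclideanSpace ℝ (Fin n) × EuclideanSpace ℝ (Fin m))) (a₀, u₀) :=
    (hΦsmooth.contDiffAt (hWopen.mem_nhds hz₀W)).hasStrictFDerivAt' hΦF (by simp)
  set P := hstrict.toOpenPartialHomeomorph Φ with hPdef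
  have hPcoe : ⇑P = Φ := hstrict.toOpenPartialHomeomorph_coe
  have hz₀src : (a₀, u₀) ∈ P.source := hstrict.mem_toOpenPartialHomeomorph_source
  have hFz₀ : Fm (a₀, u₀) = 0 := hcrit
  have hΦz₀ : Φ (a₀, u₀) = (a₀, 0) := by
    rw [hΦdef]
    simp only []
    rw [hFz₀]
  have htgt : (a₀, (0 : EuclideanSpace ℝ (Fin m))) ∈ P.target := by
    have := P.map_source hz₀src
    rwa [hPcoe, hΦz₀] at this
  have hsymm₀ : P.symm (a₀, 0) = (a₀, u₀) := by
    rw [← hΦz₀, ← hPcoe]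
    exact P.left_inv hz₀src
  set σ : EuclideanSpace ℝ (Fin n) → EuclideanSpace ℝ (Fin m) :=
    fun a => (P.symm (a, 0)).2 with hσdef
  have hσa₀ : σ a₀ = u₀ := by rw [hσdef]; simp [hsymm₀]
  have hkey : ∀ a, (a, (0 : EuclideanSpace ℝ (Fin m))) ∈ P.target →
      P.symm (a, 0) = (a, σ a) ∧ Fm (a, σ a) = 0 ∧ (a, σ a) ∈ P.source := by
    intro a ha
    have h1 : Φ (P.symm (a, 0)) = (a, 0) := by rw [← hPcoe]; exact P.right_inv ha
    have hfst : (P.symm (a, 0)).1 = a := by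
      have := congrArg Prod.fst h1
      simpa [hΦdef] using this
    have hps : P.symm (a, 0) = (a, σ a) := by
      rw [hσdef]; exact Prod.ext hfst rfl
    refine ⟨hps, ?_, ?_⟩
    · have h2 := congrArg Prod.snd h1
      rw [hps] at h2
      simpa [hΦdef] using h2
    · have := P.map_target ha
      rwa [hps] at this
  -- open set where the derivative of Φ is invertible
  have hfdcont : ContinuousOn (fderiv ℝ Φ) W :=
    hΦsmooth.continuousOn_fderiv_of_isOpen hWopen hone
  set Gs : Set (EuclideanSpace ℝ (Fin n) × EuclideanSpace ℝ (Fin m)) :=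
    W ∩ (fderiv ℝ Φ) ⁻¹' {T | IsUnit T} with hGsdef
  have hGsopen : IsOpen Gs := set_option synthInstance.maxHeartbeats 400000 in
    hfdcont.isOpen_inter_preimage hWopen Units.isOpen
  have hz₀Gs : (a₀, u₀) ∈ Gs := by
    refine ⟨hz₀W, ?_⟩
    show IsUnit (fderiv ℝ Φ (a₀, u₀))
    rw [hstrict.hasFDerivAt.fderiv]
    exact ⟨Φeq.toUnit, rfl⟩
  set Ω : Set (EuclideanSpace ℝ (Fin n) × EuclideanSpace ℝ (Fin m)) :=
    P.source ∩ Gs with hΩdef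
  have hΩopen : IsOpen Ω := P.open_source.inter hGsopen
  have hz₀Ω : (a₀, u₀) ∈ Ω := ⟨hz₀src, hz₀Gs⟩
  set T : Set (EuclideanSpace ℝ (Fin n) × EuclideanSpace ℝ (Fin m)) :=
    P.target ∩ P.symm ⁻¹' Ω with hTdef
  have hTopen : IsOpen T :=
    P.continuousOn_symm.isOpen_inter_preimage P.open_target hΩopen
  have hT₀ : (a₀, (0 : EuclideanSpace ℝ (Fin m))) ∈ T := by
    refine ⟨htgt, ?_⟩
    show P.symm (a₀, 0) ∈ Ω
    rw [hsymm₀]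
    exact hz₀Ω
  set A₀ : Set (EuclideanSpace ℝ (Fin n)) :=
    {a | (a, (0 : EuclideanSpace ℝ (Fin m))) ∈ T} with hA₀def
  have hA₀open : IsOpen A₀ :=
    hTopen.preimage (continuous_id.prodMk continuous_const)
  have ha₀A₀ : a₀ ∈ A₀ := hT₀
  have hσat : ∀ a ∈ A₀, ContDiffAt ℝ ((⊤ : ℕ∞) : WithTop ℕ∞) σ a := by
    intro a ha
    obtain ⟨haTgt, haΩ⟩ := ha
    have haΩ' : P.symm (a, 0) ∈ Ω := haΩ
    have hzW : P.symm (a, 0) ∈ W := haΩ'.2.1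
    have hzunit : IsUnit (fderiv ℝ Φ (P.symm (a, 0))) := haΩ'.2.2
    have hΦz : ContDiffAt ℝ ((⊤ : ℕ∞) : WithTop ℕ∞) Φ (P.symm (a, 0)) :=
      hΦsmooth.contDiffAt (hWopen.mem_nhds hzW)
    have hdz : HasFDerivAt Φ (fderiv ℝ Φ (P.symm (a, 0))) (P.symm (a, 0)) :=
      (hΦz.differentiableAt (by simp)).hasFDerivAt
    have hsymmCD : ContDiffAt ℝ ((⊤ : ℕ∞) : WithTop ℕ∞) P.symm (a, 0) := by
      apply P.contDiffAt_symm (f₀' := ContinuousLinearEquiv.ofUnit hzunit.unit) haTgt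
      · rw [hPcoe]
        have hcoe : ((ContinuousLinearEquiv.ofUnit hzunit.unit) :
            (EuclideanSpace ℝ (Fin n) × EuclideanSpace ℝ (Fin m)) →L[ℝ]
            (EuclideanSpace ℝ (Fin n) × EuclideanSpace ℝ (Fin m))) =
            fderiv ℝ Φ (P.symm (a, 0)) := hzunit.unit_spec
        rw [hcoe]
        exact hdz
      · rw [hPcoe]
        exact hΦz
    have hcomp : ContDiffAt ℝ ((⊤ : ℕ∞) : WithTop ℕ∞)
        (fun a : EuclideanSpace ℝ (Fin n) => (P.symm (a, 0)).2) a := by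
      have h1 : ContDiffAt ℝ ((⊤ : ℕ∞) : WithTop ℕ∞)
          (fun a : EuclideanSpace ℝ (Fin n) => (a, (0 : EuclideanSpace ℝ (Fin m)))) a :=
        (contDiff_id.prodMk contDiff_const).contDiffAt
      exact contDiff_snd.contDiffAt.comp _ (hsymmCD.comp a h1)
    exact hcomp
  have hσcont : ContinuousOn σ A₀ := fun a ha =>
    ((hσat a ha).continuousAt).continuousWithinAt
  -- product neighborhood inside Ω
  obtain ⟨A₁, U', hA₁open, hU'open, ha₀A₁, hu₀U', hsub⟩ :=
    isOpen_prod_iff.1 hΩopen a₀ u₀ hz₀Ω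
  have hU'U : U' ⊆ U := by
    intro u hu
    have : (a₀, u) ∈ Ω := hsub (Set.mk_mem_prod ha₀A₁ hu)
    exact this.2.1.2
  -- derivative of σ at a₀
  have hsymmStrict : HasStrictFDerivAt P.symm
      ((Φeq.symm : (EuclideanSpace ℝ (Fin n) × EuclideanSpace ℝ (Fin m)) →L[ℝ]
        (EuclideanSpace ℝ (Fin n) × EuclideanSpace ℝ (Fin m)))) (a₀, 0) := by
    have h := hstrict.to_localInverse
    rw [hstrict.localInverse_def, hΦz₀] at h
    exact h
  set ι : EuclideanSpace ℝ (Fin n) →L[ℝ]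
      (EuclideanSpace ℝ (Fin n) × EuclideanSpace ℝ (Fin m)) :=
    (ContinuousLinearMap.id ℝ (EuclideanSpace ℝ (Fin n))).prod 0 with hιdef
  have hι : HasFDerivAt
      (fun a : EuclideanSpace ℝ (Fin n) => (a, (0 : EuclideanSpace ℝ (Fin m)))) ι a₀ := by
    exact ι.hasFDerivAt
  have hσ'comp := hasFDerivAt_snd.comp a₀ (hsymmStrict.hasFDerivAt.comp a₀ hι)
  have hσ' : HasFDerivAt σ (Hinv.comp Bu₀) a₀ := by
    refine hσ'comp.congr_fderiv ?_
    symm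
    apply ContinuousLinearMap.ext
    intro x
    simp only [ContinuousLinearMap.coe_comp', Function.comp_apply, hιdef,
      ContinuousLinearMap.prod_apply, ContinuousLinearMap.coe_id', id_eq,
      ContinuousLinearMap.zero_apply, hΦeqdef, ContinuousLinearEquiv.coe_coe,
      ContinuousLinearEquiv.symm_equivOfInverse, ContinuousLinearEquiv.equivOfInverse_apply,
      hTinvdef, ContinuousLinearMap.coe_snd', ContinuousLinearMap.coe_fst',
      ContinuousLinearMap.sub_apply, sub_zero]
  have hψu₀ : HasFDerivAt ψ Dψ₀ u₀ :=
    ((hψ.contDiffAt (hU.mem_nhds hu₀U)).differentiableAt (by simp)).hasFDerivAt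
  set L := (Dψ₀.comp Hinv).comp Bu₀ with hLdef
  have hxL : HasFDerivAt (fun a => ψ (σ a)) L a₀ := by
    have hψσ : HasFDerivAt ψ Dψ₀ (σ a₀) := by rw [hσa₀]; exact hψu₀
    have h := hψσ.comp a₀ hσ'
    rw [hLdef, ContinuousLinearMap.comp_assoc]
    exact h
  have hfderivx : fderiv ℝ (fun a => ψ (σ a)) a₀ = L := hxL.fderiv
  -- bound neighborhood
  have hbdev : ∀ᶠ a in 𝓝 a₀, ‖ψ (σ a) - ψ (σ a₀)‖ ≤ (‖L‖ + 1) * ‖a - a₀‖ := by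
    have h := hxL.isLittleO.def one_pos
    filter_upwards [h] with a ha
    have h2 : ‖ψ (σ a) - ψ (σ a₀)‖ ≤ ‖ψ (σ a) - ψ (σ a₀) - L (a - a₀)‖ + ‖L (a - a₀)‖ := by
      simpa using norm_add_le (ψ (σ a) - ψ (σ a₀) - L (a - a₀)) (L (a - a₀))
    calc ‖ψ (σ a) - ψ (σ a₀)‖
        ≤ ‖ψ (σ a) - ψ (σ a₀) - L (a - a₀)‖ + ‖L (a - a₀)‖ := h2
      _ ≤ 1 * ‖a - a₀‖ + ‖L‖ * ‖a - a₀‖ := add_le_add ha (L.le_opNorm _)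
      _ = (‖L‖ + 1) * ‖a - a₀‖ := by ring
  obtain ⟨N, hN, hNopen, ha₀N⟩ := eventually_nhds_iff.1 hbdev
  -- the final neighborhoods
  set A' : Set (EuclideanSpace ℝ (Fin n)) := A₀ ∩ A₁ ∩ N with hA'def
  have hA'open : IsOpen A' := (hA₀open.inter hA₁open).inter hNopen
  have ha₀A' : a₀ ∈ A' := ⟨⟨ha₀A₀, ha₀A₁⟩, ha₀N⟩
  set A : Set (EuclideanSpace ℝ (Fin n)) := A' ∩ σ ⁻¹' U' with hAdef
  have hAopen : IsOpen A :=
    (hσcont.mono (show A' ⊆ A₀ from fun a ha => ha.1.1)).isOpen_inter_preimage hA'open hU'open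
  have ha₀A : a₀ ∈ A := ⟨ha₀A', by show σ a₀ ∈ U'; rw [hσa₀]; exact hu₀U'⟩
  refine ⟨A, U', σ, hAopen, ha₀A, hU'open, hU'U, hu₀U', ?_, hσa₀, ?_, ?_, ?_⟩
  · exact fun a ha => (hσat a ha.1.1.1).contDiffWithinAt
  · intro a ha
    have haA₀ : a ∈ A₀ := ha.1.1.1
    have haA₁ : a ∈ A₁ := ha.1.1.2
    have haT : (a, (0 : EuclideanSpace ℝ (Fin m))) ∈ T := haA₀
    obtain ⟨hps, hFσ, hsrcσ⟩ := hkey a haT.1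
    refine ⟨ha.2, ?_⟩
    intro u huU'
    constructor
    · intro hcr
      have hzsrc : (a, u) ∈ P.source := (hsub (Set.mk_mem_prod haA₁ huU')).1
      have hFmau : Fm (a, u) = 0 := hcr
      have hΦau : Φ (a, u) = (a, 0) := by
        show (a, Fm (a, u)) = (a, 0)
        rw [hFmau]
      have hΦaσ : Φ (a, σ a) = (a, 0) := by
        show (a, Fm (a, σ a)) = (a, 0)
        rw [hFσ]
      have heq : (a, u) = (a, σ a) := by
        apply P.injOn hzsrc hsrcσ
        rw [hPcoe, hΦau, hΦaσ]
      exact congrArg Prod.snd heq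
    · rintro rfl
      exact hFσ
  · exact hfderivx
  · have hbd' : ∀ a ∈ A, ‖ψ (σ a) - ψ (σ a₀)‖ ≤ (‖L‖ + 1) * ‖a - a₀‖ :=
      fun a ha => hN a ha.1.2
    have hlim := lim_sup_quotient hxL hAopen ha₀A hbd'
    have hnorm : ‖L‖ = ‖Hinv‖ := norm_comp_eq Dψ₀ horth Hinv
    rw [← hnorm]
    exact hlim
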